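/- For a directed set D of convex Cauchy-closed sets of distributions such that every μ ∈ sup D assigns the same probability p to event A, minProb is continuous: sup_{S∈D} minProb(S, A) = minProb(sup D, A). Equivalently, assuming sup_{S∈D} minProb(S,A) = p − ε with ε > 0 leads to a contradiction via the finite intersection property of the closed sets T_S = {μ ∈ S : μ(A) ≤ p − ε}. -/

import Mathlib

/-- A discrete probability distribution on `X ∪ {⊥}` (`⊥` encoded as `none`). -/
def IsDistO {X : Type*} (μ : Option X → ℝ) : Prop :=
  (∀ a, 0 ≤ μ a) ∧ HasSum μ 1

/-- The order on distributions: pointwise `≤` on `X` and reversed on `⊥`. -/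
def dLe {X : Type*} (μ ν : Option X → ℝ) : Prop :=
  (∀ x : X, μ (some x) ≤ ν (some x)) ∧ ν none ≤ μ none

/-- `S` is an element of the convex powerset `C(X)`: a nonempty, up-closed, convex,
Cauchy-closed (topologically closed in the product topology) set of distributions
over `X ∪ {⊥}`. -/
def IsCSet {X : Type*} (S : Set (Option X → ℝ)) : Prop :=
  S.Nonempty ∧ (∀ μ ∈ S, IsDistO μ) ∧
  (∀ μ ∈ S, ∀ ν ∈ S, ∀ p : ℝ, 0 ≤ p → p ≤ 1 →
    (fun a => p * μ a + (1 - p) * ν a) ∈ S) ∧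
  (∀ μ ∈ S, ∀ ν, IsDistO ν → dLe μ ν → ν ∈ S) ∧
  IsClosed S

/-- The probability a distribution assigns to an event `A ⊆ X`. -/
noncomputable def probOf {X : Type*} (μ : Option X → ℝ) (A : Set X) : ℝ :=
  ∑' x : A, μ (some ↑x)

/-- The minimum probability of the event `A` over the set of distributions `S`. -/
noncomputable def minProb {X : Type*} (S : Set (Option X → ℝ)) (A : Set X) : ℝ :=
  sInf ((fun μ => probOf μ A) '' S)

/-- Kleisli extension of `f` for the convex powerset monad: mix, for each state in
the support of some `μ ∈ S`, a continuation distribution drawn from `f`; at `⊥`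
the continuation may be any distribution (the bottom element `⊥_C`). -/
def kleisli {X : Type*} (f : X → Set (Option X → ℝ)) (S : Set (Option X → ℝ)) :
    Set (Option X → ℝ) :=
  {g | ∃ μ ∈ S, ∃ ν : Option X → (Option X → ℝ),
        (∀ a, IsDistO (ν a)) ∧
        (∀ x : X, μ (some x) ≠ 0 → ν (some x) ∈ f x) ∧
        g = fun b => ∑' a : Option X, μ a * ν a b}

/-- Binary convex (nondeterministic) union `S ⋓ T`. -/
def cUnion2 {X : Type*} (S T : Set (Option X → ℝ)) : Set (Option X → ℝ) :=
  {g | ∃ μ ∈ S, ∃ ν ∈ T, ∃ p : ℝ, 0 ≤ p ∧ p ≤ 1 ∧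
        g = fun a => p * μ a + (1 - p) * ν a}

/-- Finite convex (nondeterministic) union `⋓_{i∈s} S_i`: all convex combinations
of choices from the `S_i`. -/
def cUnionF {I X : Type*} (s : Finset I) (S : I → Set (Option X → ℝ)) :
    Set (Option X → ℝ) :=
  {g | ∃ w : I → ℝ, (∀ i, 0 ≤ w i) ∧ (∑ i ∈ s, w i) = 1 ∧
        ∃ μ : I → (Option X → ℝ), (∀ i ∈ s, μ i ∈ S i) ∧
          g = fun a => ∑ i ∈ s, w i * μ i a}

/-- Scott continuity of `minProb`: for a directed set `D` of convex
powerset elements (Smyth order, suprema given by intersections) such that every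
distribution in `sup D = ⋂₀ D` assigns the same probability `p` to the event `A`,
`sup_{S∈D} minProb S A = minProb (sup D) A`. -/
theorem stmt_15 {X : Type*} [Countable X] (D : Set (Set (Option X → ℝ)))
    (hne : D.Nonempty) (hC : ∀ S ∈ D, IsCSet S)
    (hdir : ∀ S ∈ D, ∀ T ∈ D, ∃ U ∈ D, U ⊆ S ∧ U ⊆ T)
    (A : Set X) (p : ℝ) (hp : ∀ μ ∈ ⋂₀ D, probOf μ A = p) :
    sSup ((fun S => minProb S A) '' D) = minProb (⋂₀ D) A := by
  classical
  haveI : Nonempty ↥D := hne.to_subtype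
  -- the compact box
  have hbox : IsCompact {μ : Option X → ℝ | ∀ a, μ a ∈ Set.Icc (0:ℝ) 1} := by
    have h := isCompact_univ_pi (fun _ : Option X => (isCompact_Icc : IsCompact (Set.Icc (0:ℝ) 1)))
    convert h using 1
    ext f
    simp only [Set.mem_setOf_eq, Set.mem_univ_pi]
  have hsub : ∀ S ∈ D, S ⊆ {μ : Option X → ℝ | ∀ a, μ a ∈ Set.Icc (0:ℝ) 1} := by
    intro S hS μ hμ a
    obtain ⟨hnn, hsum⟩ := (hC S hS).2.1 μ hμ
    exact ⟨hnn a, le_hasSum hsum a (fun b _ => hnn b)⟩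
  have hcomp : ∀ S ∈ D, IsCompact S := fun S hS =>
    hbox.of_isClosed_subset (hC S hS).2.2.2.2 (hsub S hS)
  -- summability and basic facts about probOf
  have hsummable : ∀ μ : Option X → ℝ, IsDistO μ → Summable (fun x : A => μ (some ↑x)) := by
    intro μ hμ
    exact hμ.2.summable.comp_injective
      (fun x y h => Subtype.ext (Option.some_injective X h))
  have hprobnn : ∀ μ : Option X → ℝ, IsDistO μ → 0 ≤ probOf μ A := by
    intro μ hμ
    exact tsum_nonneg (fun x => hμ.1 _)
  have hiff : ∀ μ : Option X → ℝ, IsDistO μ → ∀ c : ℝ,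
      (probOf μ A ≤ c ↔ ∀ F : Finset A, ∑ x ∈ F, μ (some ↑x) ≤ c) := by
    intro μ hμ c
    constructor
    · intro h F
      exact le_trans (Summable.sum_le_tsum F (fun i _ => hμ.1 _) (hsummable μ hμ)) h
    · intro h
      exact Summable.tsum_le_of_sum_le (hsummable μ hμ) h
  -- ⋂₀ D is nonempty
  have hZdir : Directed (· ⊇ ·) (fun S : ↥D => (S : Set (Option X → ℝ))) := by
    rintro ⟨S, hS⟩ ⟨T, hT⟩
    obtain ⟨U, hU, h1, h2⟩ := hdir S hS T hT
    exact ⟨⟨U, hU⟩, h1, h2⟩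
  have hInter : (⋂ S : ↥D, (S : Set (Option X → ℝ))).Nonempty :=
    IsCompact.nonempty_iInter_of_directed_nonempty_isCompact_isClosed _ hZdir
      (fun S => (hC S S.2).1) (fun S => hcomp S S.2) (fun S => (hC S S.2).2.2.2.2)
  have hIeq : ⋂₀ D = ⋂ S : ↥D, (S : Set (Option X → ℝ)) := Set.sInter_eq_iInter
  obtain ⟨μ₀, hμ₀⟩ : (⋂₀ D).Nonempty := by rw [hIeq]; exact hInter
  -- RHS = p
  have hRHS : minProb (⋂₀ D) A = p := by
    unfold minProb
    have himg : (fun μ => probOf μ A) '' (⋂₀ D) = {p} := by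
      apply Set.eq_singleton_iff_nonempty_unique_mem.mpr
      refine ⟨⟨probOf μ₀ A, Set.mem_image_of_mem _ hμ₀⟩, ?_⟩
      rintro x ⟨μ, hμ, rfl⟩
      exact hp μ hμ
    rw [himg, csInf_singleton]
  rw [hRHS]
  -- each minProb S A ≤ p
  have hle : ∀ S ∈ D, minProb S A ≤ p := by
    intro S hS
    have hmem : p ∈ (fun μ => probOf μ A) '' S := by
      refine ⟨μ₀, hμ₀ S hS, hp μ₀ hμ₀⟩
    refine csInf_le ⟨0, ?_⟩ hmem
    rintro y ⟨μ, hμ, rfl⟩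
    exact hprobnn μ ((hC S hS).2.1 μ hμ)
  have hbddA : BddAbove ((fun S => minProb S A) '' D) := by
    refine ⟨p, ?_⟩
    rintro y ⟨S, hS, rfl⟩
    exact hle S hS
  have hsle : sSup ((fun S => minProb S A) '' D) ≤ p :=
    csSup_le (hne.image _) (by rintro y ⟨S, hS, rfl⟩; exact hle S hS)
  refine le_antisymm hsle ?_
  by_contra h
  push_neg at h
  set q := sSup ((fun S => minProb S A) '' D) with hq
  set q' := (q + p) / 2 with hq'
  have hqq' : q < q' := by rw [hq']; linarith
  have hq'p : q' < p := by rw [hq']; linarith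
  -- the family T
  set T : ↥D → Set (Option X → ℝ) :=
    fun S => {μ ∈ (S : Set (Option X → ℝ)) | ∀ F : Finset A, ∑ x ∈ F, μ (some ↑x) ≤ q'} with hT
  have hclosedC : IsClosed {μ : Option X → ℝ | ∀ F : Finset A, ∑ x ∈ F, μ (some ↑x) ≤ q'} := by
    have heq : {μ : Option X → ℝ | ∀ F : Finset A, ∑ x ∈ F, μ (some ↑x) ≤ q'} =
        ⋂ F : Finset A, {μ : Option X → ℝ | ∑ x ∈ F, μ (some ↑x) ≤ q'} := by
      ext μ; simp
    rw [heq]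
    exact isClosed_iInter fun F =>
      isClosed_le (continuous_finset_sum F fun x _ => continuous_apply (some (x : X))) continuous_const
  have hTclosed : ∀ S : ↥D, IsClosed (T S) := by
    intro S
    exact ((hC S S.2).2.2.2.2).inter hclosedC
  have hTcomp : ∀ S : ↥D, IsCompact (T S) := by
    intro S
    exact (hcomp S S.2).of_isClosed_subset (hTclosed S) (Set.sep_subset _ _)
  have hTne : ∀ S : ↥D, (T S).Nonempty := by
    intro ⟨S, hS⟩
    have h1 : minProb S A ≤ q := le_csSup hbddA ⟨S, hS, rfl⟩
    have h2 : minProb S A < q' := lt_of_le_of_lt h1 hqq'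
    obtain ⟨y, ⟨μ, hμ, rfl⟩, hy⟩ :=
      exists_lt_of_csInf_lt ((hC S hS).1.image _) h2
    exact ⟨μ, hμ, (hiff μ ((hC S hS).2.1 μ hμ) q').mp (le_of_lt hy)⟩
  have hTdir : Directed (· ⊇ ·) T := by
    rintro ⟨S, hS⟩ ⟨S', hS'⟩
    obtain ⟨U, hU, h1, h2⟩ := hdir S hS S' hS'
    refine ⟨⟨U, hU⟩, ?_, ?_⟩ <;>
      · rintro μ ⟨hμ, hμ'⟩
        first
        | exact ⟨h1 hμ, hμ'⟩
        | exact ⟨h2 hμ, hμ'⟩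
  obtain ⟨μ₁, hμ₁⟩ :=
    IsCompact.nonempty_iInter_of_directed_nonempty_isCompact_isClosed T hTdir hTne hTcomp hTclosed
  simp only [Set.mem_iInter] at hμ₁
  have hμ₁D : μ₁ ∈ ⋂₀ D := by
    rw [hIeq, Set.mem_iInter]
    exact fun S => (hμ₁ S).1
  obtain ⟨S₀, hS₀⟩ := hne
  have hdist : IsDistO μ₁ := (hC S₀ hS₀).2.1 μ₁ ((hμ₁ ⟨S₀, hS₀⟩).1)
  have hle' : probOf μ₁ A ≤ q' := (hiff μ₁ hdist q').mpr (hμ₁ ⟨S₀, hS₀⟩).2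
  rw [hp μ₁ hμ₁D] at hle'
  linarith
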